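/- The following two-sided bound holds, with all suprema taken in [0,∞]: sup_{n ∈ ℕ} (Σ_{k=0}^n s_k s_{k+1} ℓ_k)·(Σ_{k=n+1}^∞ ℓ_k/(s_k s_{k+1})) ≤ sup_{x ∈ (0,L)} (∫_{(0,x)} μ(s) ds)·(∫_{(x,L)} μ(s)⁻¹ ds) ≤ sup_{n ∈ ℕ} (Σ_{k=0}^n s_k s_{k+1} ℓ_k)·(Σ_{k=n}^∞ ℓ_k/(s_k s_{k+1})). -/

import Mathlib

open MeasureTheory Filter Topology
open scoped ENNReal

section AuxSGC

variable {s : ℕ → ℕ} {ℓ : ℕ → ℝ} {t : ℕ → ℝ} {L : ℝ≥0∞} {μ : ℝ → ℝ}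

private lemma sgc_mono (hℓ : ∀ n, 0 < ℓ n) (htrec : ∀ n, t (n + 1) = t n + ℓ n) :
    StrictMono t :=
  strictMono_nat_of_lt_succ fun n => by rw [htrec]; linarith [hℓ n]

private lemma sgc_nonneg (hℓ : ∀ n, 0 < ℓ n) (ht0 : t 0 = 0)
    (htrec : ∀ n, t (n + 1) = t n + ℓ n) (n : ℕ) : 0 ≤ t n := by
  rcases Nat.eq_zero_or_pos n with h | h
  · simp [h, ht0]
  · exact le_of_lt (ht0 ▸ (sgc_mono hℓ htrec h))

private lemma sgc_sum (ht0 : t 0 = 0) (htrec : ∀ n, t (n + 1) = t n + ℓ n) (n : ℕ) :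
    t n = ∑ k ∈ Finset.range n, ℓ k := by
  induction n with
  | zero => simp [ht0]
  | succ n ih => rw [htrec, ih, Finset.sum_range_succ]

private lemma sgc_tlt (hℓ : ∀ n, 0 < ℓ n) (ht0 : t 0 = 0)
    (htrec : ∀ n, t (n + 1) = t n + ℓ n) (hL : L = ∑' n, ENNReal.ofReal (ℓ n)) (n : ℕ) :
    ENNReal.ofReal (t n) < L := by
  have h1 : ENNReal.ofReal (t n) = ∑ k ∈ Finset.range n, ENNReal.ofReal (ℓ k) := by
    rw [sgc_sum ht0 htrec]
    exact ENNReal.ofReal_sum_of_nonneg fun i _ => (hℓ i).le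
  have h2 : (∑ k ∈ Finset.range n, ENNReal.ofReal (ℓ k)) <
      ∑ k ∈ Finset.range (n + 1), ENNReal.ofReal (ℓ k) := by
    rw [Finset.sum_range_succ]
    refine ENNReal.lt_add_right ?_ ?_
    · exact (ENNReal.sum_lt_top.2 fun i _ => ENNReal.ofReal_lt_top).ne
    · simp [ENNReal.ofReal_eq_zero, not_le, hℓ n]
  calc ENNReal.ofReal (t n) < ∑ k ∈ Finset.range (n + 1), ENNReal.ofReal (ℓ k) :=
        h1 ▸ h2
    _ ≤ L := hL ▸ ENNReal.sum_le_tsum _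

private lemma sgc_exists (hℓ : ∀ n, 0 < ℓ n) (ht0 : t 0 = 0)
    (htrec : ∀ n, t (n + 1) = t n + ℓ n) (hL : L = ∑' n, ENNReal.ofReal (ℓ n))
    {y : ℝ} (hy : 0 ≤ y) (hyL : ENNReal.ofReal y < L) :
    ∃ n, t n ≤ y ∧ y < t (n + 1) := by
  have hex : ∃ N, y < t N := by
    rw [hL, ENNReal.tsum_eq_iSup_sum] at hyL
    obtain ⟨F, hF⟩ := lt_iSup_iff.1 hyL
    obtain ⟨N, hN⟩ := F.exists_nat_subset_range
    have : ENNReal.ofReal y < ENNReal.ofReal (t N) := by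
      refine lt_of_lt_of_le hF ?_
      rw [sgc_sum ht0 htrec, ENNReal.ofReal_sum_of_nonneg fun i _ => (hℓ i).le]
      exact Finset.sum_le_sum_of_subset hN
    by_contra h
    push_neg at h
    exact absurd (ENNReal.ofReal_le_ofReal (h N)) (not_le.2 this)
  classical
  have hK : y < t (Nat.find hex) := Nat.find_spec hex
  have hK0 : Nat.find hex ≠ 0 := by
    intro h
    rw [h, ht0] at hK
    linarith
  refine ⟨Nat.find hex - 1, ?_, ?_⟩
  · have := Nat.find_min hex (m := Nat.find hex - 1) (by omega)
    linarith [not_lt.1 this]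
  · rw [Nat.sub_add_cancel (Nat.one_le_iff_ne_zero.2 hK0)]
    exact hK

private lemma sgc_piece (hs : ∀ n, 1 ≤ s n) (hℓ : ∀ n, 0 < ℓ n)
    (htrec : ∀ n, t (n + 1) = t n + ℓ n)
    (hμ : ∀ n : ℕ, ∀ x ∈ Set.Ico (t n) (t (n + 1)), μ x = (s n : ℝ) * (s (n + 1) : ℝ))
    (j : ℕ) :
    ∫⁻ y in Set.Ico (t j) (t (j + 1)), ENNReal.ofReal (μ y)
      = ENNReal.ofReal ((s j : ℝ) * (s (j + 1) : ℝ) * ℓ j) := by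
  rw [setLIntegral_congr_fun measurableSet_Ico
    ((fun y hy => by rw [hμ j y hy] :
      ∀ y ∈ Set.Ico (t j) (t (j + 1)),
        ENNReal.ofReal (μ y) = ENNReal.ofReal ((s j : ℝ) * (s (j + 1) : ℝ)))),
    setLIntegral_const, Real.volume_Ico, htrec]
  rw [← ENNReal.ofReal_mul (by positivity)]
  ring_nf

private lemma sgc_piece_inv (hs : ∀ n, 1 ≤ s n) (hℓ : ∀ n, 0 < ℓ n)
    (htrec : ∀ n, t (n + 1) = t n + ℓ n)
    (hμ : ∀ n : ℕ, ∀ x ∈ Set.Ico (t n) (t (n + 1)), μ x = (s n : ℝ) * (s (n + 1) : ℝ))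
    (j : ℕ) :
    ∫⁻ y in Set.Ico (t j) (t (j + 1)), ENNReal.ofReal ((μ y)⁻¹)
      = ENNReal.ofReal (ℓ j / ((s j : ℝ) * (s (j + 1) : ℝ))) := by
  rw [setLIntegral_congr_fun measurableSet_Ico
    ((fun y hy => by rw [hμ j y hy] :
      ∀ y ∈ Set.Ico (t j) (t (j + 1)),
        ENNReal.ofReal ((μ y)⁻¹) = ENNReal.ofReal (((s j : ℝ) * (s (j + 1) : ℝ))⁻¹))),
    setLIntegral_const, Real.volume_Ico, htrec]
  rw [← ENNReal.ofReal_mul (by positivity)]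
  rw [show t j + ℓ j - t j = ℓ j by ring, inv_mul_eq_div]

/-- value of the left integral at `t m` -/
private lemma sgc_left (hs : ∀ n, 1 ≤ s n) (hℓ : ∀ n, 0 < ℓ n) (ht0 : t 0 = 0)
    (htrec : ∀ n, t (n + 1) = t n + ℓ n)
    (hμ : ∀ n : ℕ, ∀ x ∈ Set.Ico (t n) (t (n + 1)), μ x = (s n : ℝ) * (s (n + 1) : ℝ))
    (m : ℕ) :
    ∫⁻ y in Set.Ioo 0 (t m), ENNReal.ofReal (μ y)
      = ∑ k ∈ Finset.range m, ENNReal.ofReal ((s k : ℝ) * (s (k + 1) : ℝ) * ℓ k) := by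
  rw [setLIntegral_congr (Ioo_ae_eq_Ico (a := (0:ℝ)) (b := t m))]
  induction m with
  | zero => simp [ht0]
  | succ m ih =>
    have hsplit : Set.Ico (0:ℝ) (t (m + 1)) = Set.Ico 0 (t m) ∪ Set.Ico (t m) (t (m + 1)) :=
      (Set.Ico_union_Ico_eq_Ico (sgc_nonneg hℓ ht0 htrec m)
        ((sgc_mono hℓ htrec) (Nat.lt_succ_self m)).le).symm
    rw [hsplit, lintegral_union measurableSet_Ico
        (Set.Ico_disjoint_Ico.2 (le_trans (min_le_left _ _) (le_max_right _ _))),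
      ih, sgc_piece hs hℓ htrec hμ, Finset.sum_range_succ]

private lemma sgc_union (hℓ : ∀ n, 0 < ℓ n) (ht0 : t 0 = 0)
    (htrec : ∀ n, t (n + 1) = t n + ℓ n) (hL : L = ∑' n, ENNReal.ofReal (ℓ n)) (m : ℕ) :
    {y : ℝ | t m ≤ y ∧ ENNReal.ofReal y < L}
      = ⋃ k : ℕ, Set.Ico (t (m + k)) (t (m + k + 1)) := by
  ext y
  simp only [Set.mem_setOf_eq, Set.mem_iUnion, Set.mem_Ico]
  constructor
  · rintro ⟨hy1, hy2⟩
    obtain ⟨n, hn1, hn2⟩ := sgc_exists hℓ ht0 htrec hL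
      (le_trans (sgc_nonneg hℓ ht0 htrec m) hy1) hy2
    have hmn : m ≤ n := by
      by_contra h
      push_neg at h
      have : t (n + 1) ≤ t m := (sgc_mono hℓ htrec).monotone h
      linarith
    exact ⟨n - m, by rw [Nat.add_sub_cancel' hmn]; exact ⟨hn1, hn2⟩⟩
  · rintro ⟨k, hk1, hk2⟩
    refine ⟨le_trans ((sgc_mono hℓ htrec).monotone (Nat.le_add_right m k)) hk1, ?_⟩
    calc ENNReal.ofReal y < ENNReal.ofReal (t (m + k + 1)) := by
          refine (ENNReal.ofReal_lt_ofReal_iff_of_nonneg ?_).2 hk2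
          exact le_trans (sgc_nonneg hℓ ht0 htrec _) hk1
      _ < L := sgc_tlt hℓ ht0 htrec hL _

/-- value of the right integral at `t m` -/
private lemma sgc_right (hs : ∀ n, 1 ≤ s n) (hℓ : ∀ n, 0 < ℓ n) (ht0 : t 0 = 0)
    (htrec : ∀ n, t (n + 1) = t n + ℓ n) (hL : L = ∑' n, ENNReal.ofReal (ℓ n))
    (hμ : ∀ n : ℕ, ∀ x ∈ Set.Ico (t n) (t (n + 1)), μ x = (s n : ℝ) * (s (n + 1) : ℝ))
    (m : ℕ) :
    ∫⁻ y in {y : ℝ | t m < y ∧ ENNReal.ofReal y < L}, ENNReal.ofReal ((μ y)⁻¹)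
      = ∑' k : ℕ, ENNReal.ofReal (ℓ (m + k) / ((s (m + k) : ℝ) * (s (m + k + 1) : ℝ))) := by
  have hae : {y : ℝ | t m < y ∧ ENNReal.ofReal y < L}
      =ᵐ[volume] {y : ℝ | t m ≤ y ∧ ENNReal.ofReal y < L} := by
    refine (MeasureTheory.ae_eq_set).2 ⟨?_, ?_⟩
    · have hsub : {y : ℝ | t m < y ∧ ENNReal.ofReal y < L}
          ⊆ {y : ℝ | t m ≤ y ∧ ENNReal.ofReal y < L} := fun y hy => ⟨hy.1.le, hy.2⟩
      rw [Set.diff_eq_empty.2 hsub]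
      simp
    · refine measure_mono_null (fun y hy => ?_) (measure_singleton (t m))
      rcases hy with ⟨⟨h1, h2⟩, h3⟩
      simp only [Set.mem_setOf_eq, not_and, not_lt] at h3
      have : ¬ t m < y := fun h => absurd (h3 h) (not_le.2 h2)
      exact le_antisymm (not_lt.1 this) h1
  rw [setLIntegral_congr hae, sgc_union hℓ ht0 htrec hL,
    lintegral_iUnion (fun k => measurableSet_Ico) ?_]
  · exact tsum_congr fun k => sgc_piece_inv hs hℓ htrec hμ _
  · intro i j hij
    refine Set.Ico_disjoint_Ico.2 ?_
    rcases hij.lt_or_gt with h | h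
    · exact le_trans (min_le_left _ _)
        (le_trans ((sgc_mono hℓ htrec).monotone (by omega)) (le_max_right _ _))
    · exact le_trans (min_le_right _ _)
        (le_trans ((sgc_mono hℓ htrec).monotone (by omega)) (le_max_left _ _))

end AuxSGC

/-- display (6.7), Remark 6.2.  Two-sided bound for
`C(L) = sup_{x ∈ (0,L)} ∫₀ˣ μ · ∫ₓᴸ 1/μ` in terms of the discrete quantities. -/
theorem spectral_gap_constant_estimate (s : ℕ → ℕ) (hs : ∀ n, 1 ≤ s n)
    (ℓ : ℕ → ℝ) (hℓ : ∀ n, 0 < ℓ n)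
    (t : ℕ → ℝ) (ht0 : t 0 = 0) (htrec : ∀ n, t (n + 1) = t n + ℓ n)
    (L : ℝ≥0∞) (hL : L = ∑' n, ENNReal.ofReal (ℓ n))
    (μ : ℝ → ℝ)
    (hμ : ∀ n : ℕ, ∀ x ∈ Set.Ico (t n) (t (n + 1)), μ x = (s n : ℝ) * (s (n + 1) : ℝ))
    (hμout : ∀ x : ℝ, (x < 0 ∨ L ≤ ENNReal.ofReal x) → μ x = 1) :
    (⨆ n : ℕ,
      (∑ k ∈ Finset.range (n + 1), ENNReal.ofReal ((s k : ℝ) * (s (k + 1) : ℝ) * ℓ k)) *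
        (∑' k : ℕ,
          ENNReal.ofReal (ℓ (n + 1 + k) / ((s (n + 1 + k) : ℝ) * (s (n + 1 + k + 1) : ℝ))))) ≤
      (⨆ x ∈ {x : ℝ | 0 < x ∧ ENNReal.ofReal x < L},
        (∫⁻ y in Set.Ioo 0 x, ENNReal.ofReal (μ y)) *
          (∫⁻ y in {y : ℝ | x < y ∧ ENNReal.ofReal y < L}, ENNReal.ofReal ((μ y)⁻¹))) ∧
    (⨆ x ∈ {x : ℝ | 0 < x ∧ ENNReal.ofReal x < L},
        (∫⁻ y in Set.Ioo 0 x, ENNReal.ofReal (μ y)) *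
          (∫⁻ y in {y : ℝ | x < y ∧ ENNReal.ofReal y < L}, ENNReal.ofReal ((μ y)⁻¹))) ≤
      ⨆ n : ℕ,
        (∑ k ∈ Finset.range (n + 1), ENNReal.ofReal ((s k : ℝ) * (s (k + 1) : ℝ) * ℓ k)) *
          (∑' k : ℕ, ENNReal.ofReal (ℓ (n + k) / ((s (n + k) : ℝ) * (s (n + k + 1) : ℝ)))) := by
  constructor
  · -- lower bound: evaluate at x = t (n+1)
    refine iSup_le fun n => ?_
    have hxmem : t (n + 1) ∈ {x : ℝ | 0 < x ∧ ENNReal.ofReal x < L} := by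
      refine ⟨?_, sgc_tlt hℓ ht0 htrec hL _⟩
      have := sgc_mono hℓ htrec (Nat.succ_pos n)
      rwa [ht0] at this
    have hleft := sgc_left hs hℓ ht0 htrec hμ (m := n + 1)
    have hright := sgc_right hs hℓ ht0 htrec hL hμ (m := n + 1)
    calc (∑ k ∈ Finset.range (n + 1), ENNReal.ofReal ((s k : ℝ) * (s (k + 1) : ℝ) * ℓ k)) *
        (∑' k : ℕ,
          ENNReal.ofReal (ℓ (n + 1 + k) / ((s (n + 1 + k) : ℝ) * (s (n + 1 + k + 1) : ℝ))))
        = (∫⁻ y in Set.Ioo 0 (t (n + 1)), ENNReal.ofReal (μ y)) *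
          (∫⁻ y in {y : ℝ | t (n + 1) < y ∧ ENNReal.ofReal y < L},
            ENNReal.ofReal ((μ y)⁻¹)) := by rw [hleft, hright]
      _ ≤ _ := le_iSup₂ (f := fun (x : ℝ) (_ : x ∈ {x : ℝ | 0 < x ∧ ENNReal.ofReal x < L}) =>
          (∫⁻ y in Set.Ioo 0 x, ENNReal.ofReal (μ y)) *
            (∫⁻ y in {y : ℝ | x < y ∧ ENNReal.ofReal y < L}, ENNReal.ofReal ((μ y)⁻¹)))
          (t (n + 1)) hxmem
  · -- upper bound
    refine iSup₂_le fun x hx => ?_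
    obtain ⟨n, hn1, hn2⟩ := sgc_exists hℓ ht0 htrec hL hx.1.le hx.2
    calc (∫⁻ y in Set.Ioo 0 x, ENNReal.ofReal (μ y)) *
        (∫⁻ y in {y : ℝ | x < y ∧ ENNReal.ofReal y < L}, ENNReal.ofReal ((μ y)⁻¹))
        ≤ (∫⁻ y in Set.Ioo 0 (t (n + 1)), ENNReal.ofReal (μ y)) *
          (∫⁻ y in {y : ℝ | t n < y ∧ ENNReal.ofReal y < L}, ENNReal.ofReal ((μ y)⁻¹)) := by
          refine mul_le_mul' (lintegral_mono_set (Set.Ioo_subset_Ioo_right hn2.le))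
            (lintegral_mono_set fun y hy => ⟨lt_of_le_of_lt hn1 hy.1, hy.2⟩)
      _ = (∑ k ∈ Finset.range (n + 1), ENNReal.ofReal ((s k : ℝ) * (s (k + 1) : ℝ) * ℓ k)) *
          (∑' k : ℕ, ENNReal.ofReal (ℓ (n + k) / ((s (n + k) : ℝ) * (s (n + k + 1) : ℝ)))) := by
          rw [sgc_left hs hℓ ht0 htrec hμ, sgc_right hs hℓ ht0 htrec hL hμ]
      _ ≤ _ := le_iSup (fun n =>
          (∑ k ∈ Finset.range (n + 1), ENNReal.ofReal ((s k : ℝ) * (s (k + 1) : ℝ) * ℓ k)) *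
          (∑' k : ℕ, ENNReal.ofReal (ℓ (n + k) / ((s (n + k) : ℝ) * (s (n + k + 1) : ℝ))))) n
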